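/- In the weighted-majority setup with parameter η = √((log n)/T), if additionally η ≤ 1/2, then for every expert h ∈ H: ∑_{t=1}^T (ℓ_t(ALG) − ℓ_t(h))/b_t ≤ 2·√(T · log n). -/

import Mathlib

-- log(1-x) ≥ -(x + x^2) for 0 ≤ x ≤ 1/2
lemma my_log_one_sub_ge (x : ℝ) (h0 : 0 ≤ x) (h2 : x ≤ 1/2) :
    -(x + x^2) ≤ Real.log (1 - x) := by
  have hmono : MonotoneOn (fun y : ℝ => Real.log (1 - y) + (y + y^2)) (Set.Icc 0 (1/2)) := by
    have hderiv : ∀ y ∈ Set.Ioo (0:ℝ) (1/2),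
        HasDerivAt (fun y : ℝ => Real.log (1 - y) + (y + y^2)) ((1-y)⁻¹ * (-1) + (1 + 2*y)) y := by
      intro y hy
      have h1y : (0:ℝ) < 1 - y := by nlinarith [hy.2]
      have d1 : HasDerivAt (fun y : ℝ => 1 - y) (-1) y := by
        simpa using (hasDerivAt_const y (1:ℝ)).fun_sub (hasDerivAt_id y)
      have d2 := (Real.hasDerivAt_log h1y.ne').comp y d1
      have d3 : HasDerivAt (fun y : ℝ => y + y^2) (1 + 2*y) y := by
        have := (hasDerivAt_id y).fun_add (hasDerivAt_pow 2 y)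
        simpa using this
      exact d2.add d3
    apply monotoneOn_of_deriv_nonneg (convex_Icc _ _)
    · apply ContinuousOn.add
      · apply ContinuousOn.log
        · fun_prop
        · intro y hy
          have : y ≤ 1/2 := hy.2
          intro hh; nlinarith
      · fun_prop
    · rw [interior_Icc]
      intro y hy
      exact (hderiv y hy).differentiableAt.differentiableWithinAt
    · rw [interior_Icc]
      intro y hy
      rw [(hderiv y hy).deriv]
      have h1y : (0:ℝ) < 1 - y := by nlinarith [hy.2]
      have hinv : (1-y)⁻¹ ≤ 1 + 2*y := by
        rw [inv_le_iff_one_le_mul₀ h1y]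
        nlinarith [hy.1, hy.2]
      linarith
  have h00 : (0:ℝ) ∈ Set.Icc (0:ℝ) (1/2) := by constructor <;> norm_num
  have hx : x ∈ Set.Icc (0:ℝ) (1/2) := ⟨h0, h2⟩
  have := hmono h00 hx h0
  simp at this
  linarith

-- (1-η)^x ≤ 1 - η x for x ∈ [0,1], 0 ≤ η ≤ 1
lemma my_rpow_le (η x : ℝ) (hη0 : 0 ≤ η) (hη1 : η < 1) (hx0 : 0 ≤ x) (hx1 : x ≤ 1) :
    (1 - η) ^ x ≤ 1 - η * x := by
  have ha : (0:ℝ) < 1 - η := by linarith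
  have key := convexOn_exp.2 (Set.mem_univ (Real.log (1 - η))) (Set.mem_univ (0:ℝ))
    hx0 (by linarith : (0:ℝ) ≤ 1 - x) (by ring)
  simp only [smul_eq_mul, mul_zero, add_zero, Real.exp_zero, mul_one] at key
  rw [Real.exp_log ha] at key
  rw [Real.rpow_def_of_pos ha]
  calc Real.exp (Real.log (1-η) * x) = Real.exp (x * Real.log (1-η)) := by ring_nf
    _ ≤ x * (1-η) + (1-x) := key
    _ = 1 - η * x := by ring

theorem stmt_16 {H : Type*} [Fintype H] (n T : ℕ) (hn : 2 ≤ n)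
    (hcard : Fintype.card H = n) (hT : 1 ≤ T)
    (ℓ : ℕ → H → ℝ) (b : ℕ → ℝ) (η : ℝ)
    (hη : η = Real.sqrt (Real.log n / T)) (hη1 : η ≤ 1 / 2)
    (hℓ0 : ∀ t ∈ Finset.Icc 1 T, ∀ h : H, 0 ≤ ℓ t h)
    (hb : ∀ t ∈ Finset.Icc 1 T, 0 < b t)
    (hℓb : ∀ t ∈ Finset.Icc 1 T, ∀ h : H, ℓ t h ≤ b t)
    (w : ℕ → H → ℝ)
    (hw1 : ∀ h : H, w 1 h = 1)
    (hwrec : ∀ t ∈ Finset.Icc 1 T, ∀ h : H,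
      w (t + 1) h = w t h * (1 - η) ^ (ℓ t h / b t)) :
    ∀ h : H,
      ∑ t ∈ Finset.Icc 1 T,
          ((∑ h' : H, w t h' * ℓ t h') / (∑ h' : H, w t h') - ℓ t h) / b t ≤
        2 * Real.sqrt (T * Real.log n) := by
  intro h
  have hne : Nonempty H := Fintype.card_pos_iff.mp (by omega)
  have hn1 : (1:ℝ) < n := by exact_mod_cast by omega
  have hlog : 0 < Real.log n := Real.log_pos hn1
  have hT0 : (0:ℝ) < T := by exact_mod_cast hT
  have hη0 : 0 < η := hη ▸ Real.sqrt_pos.mpr (div_pos hlog hT0)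
  have hηsq : η ^ 2 = Real.log n / T := by
    rw [hη, Real.sq_sqrt (le_of_lt (div_pos hlog hT0))]
  have hlogn : Real.log n = η ^ 2 * T := by
    rw [hηsq]; field_simp
  have h1η : (0:ℝ) < 1 - η := by linarith
  -- x_t bounds
  have hx01 : ∀ t ∈ Finset.Icc 1 T, ∀ h' : H, 0 ≤ ℓ t h' / b t ∧ ℓ t h' / b t ≤ 1 := by
    intro t ht h'
    have hbt := hb t ht
    constructor
    · exact div_nonneg (hℓ0 t ht h') hbt.le
    · rw [div_le_one hbt]; exact hℓb t ht h'
  -- positivity of weights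
  have hwpos : ∀ m : ℕ, 1 ≤ m → m ≤ T + 1 → ∀ h' : H, 0 < w m h' := by
    intro m
    induction m with
    | zero => omega
    | succ k ih =>
      intro _ hk h'
      rcases Nat.eq_zero_or_pos k with hk0 | hk1
      · subst hk0; rw [hw1]; norm_num
      · rw [hwrec k (Finset.mem_Icc.mpr ⟨hk1, by omega⟩)]
        exact mul_pos (ih hk1 (by omega) h') (Real.rpow_pos_of_pos h1η _)
  have hSpos : ∀ m : ℕ, 1 ≤ m → m ≤ T + 1 → 0 < ∑ h' : H, w m h' :=
    fun m h1 h2 => Finset.sum_pos (fun h' _ => hwpos m h1 h2 h') Finset.univ_nonempty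
  -- abbreviation
  set A : ℕ → ℝ := fun t => (∑ h' : H, w t h' * (ℓ t h' / b t)) / (∑ h' : H, w t h') with hA
  have hA01 : ∀ t ∈ Finset.Icc 1 T, 0 ≤ A t ∧ A t ≤ 1 := by
    intro t ht
    have htIcc := Finset.mem_Icc.mp ht
    have hS := hSpos t htIcc.1 (by omega)
    constructor
    · apply div_nonneg _ hS.le
      apply Finset.sum_nonneg
      intro h' _
      exact mul_nonneg (hwpos t htIcc.1 (by omega) h').le (hx01 t ht h').1
    · rw [div_le_one hS]
      apply Finset.sum_le_sum
      intro h' _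
      nth_rewrite 2 [← mul_one (w t h')]
      exact mul_le_mul_of_nonneg_left (hx01 t ht h').2 (hwpos t htIcc.1 (by omega) h').le
  -- one-step bound
  have step : ∀ t ∈ Finset.Icc 1 T,
      Real.log (∑ h' : H, w (t+1) h') ≤ Real.log (∑ h' : H, w t h') - η * A t := by
    intro t ht
    have htIcc := Finset.mem_Icc.mp ht
    have hS := hSpos t htIcc.1 (by omega)
    have hS' := hSpos (t+1) (by omega) (by omega)
    have e1 : ∑ h' : H, w (t+1) h' ≤ (∑ h' : H, w t h') * (1 - η * A t) := by
      have e2 : ∑ h' : H, w (t+1) h' ≤ ∑ h' : H, w t h' * (1 - η * (ℓ t h' / b t)) := by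
        apply Finset.sum_le_sum
        intro h' _
        rw [hwrec t ht h']
        exact mul_le_mul_of_nonneg_left
          (my_rpow_le η _ hη0.le (by linarith) (hx01 t ht h').1 (hx01 t ht h').2)
          (hwpos t htIcc.1 (by omega) h').le
      have e3 : ∑ h' : H, w t h' * (1 - η * (ℓ t h' / b t))
          = (∑ h' : H, w t h') * (1 - η * A t) := by
        calc ∑ h' : H, w t h' * (1 - η * (ℓ t h' / b t))
            = ∑ h' : H, (w t h' - η * (w t h' * (ℓ t h' / b t))) :=
              Finset.sum_congr rfl (fun h' _ => by ring)
          _ = (∑ h' : H, w t h') - η * ∑ h' : H, w t h' * (ℓ t h' / b t) := by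
              rw [Finset.sum_sub_distrib, Finset.mul_sum]
          _ = (∑ h' : H, w t h') * (1 - η * A t) := by
              rw [hA]; field_simp
      linarith [e2, e3.le]
    have hA1 := (hA01 t ht).2
    have hA0 := (hA01 t ht).1
    have h1A : 0 < 1 - η * A t := by nlinarith
    calc Real.log (∑ h' : H, w (t+1) h')
        ≤ Real.log ((∑ h' : H, w t h') * (1 - η * A t)) := Real.log_le_log hS' e1
      _ = Real.log (∑ h' : H, w t h') + Real.log (1 - η * A t) := Real.log_mul hS.ne' h1A.ne'
      _ ≤ Real.log (∑ h' : H, w t h') + ((1 - η * A t) - 1) := by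
          linarith [Real.log_le_sub_one_of_pos h1A]
      _ = Real.log (∑ h' : H, w t h') - η * A t := by ring
  -- telescoping
  have hS1 : Real.log (∑ h' : H, w 1 h') = Real.log n := by
    simp [hw1, Finset.card_univ, hcard]
  have tele : ∀ m : ℕ, m ≤ T →
      Real.log (∑ h' : H, w (m+1) h') ≤ Real.log n - η * ∑ t ∈ Finset.Icc 1 m, A t := by
    intro m
    induction m with
    | zero => intro _; simp [hS1.le]
    | succ k ih =>
      intro hk
      have hik := ih (by omega)
      have hst := step (k+1) (Finset.mem_Icc.mpr ⟨by omega, hk⟩)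
      rw [Finset.sum_Icc_succ_top (by omega : 1 ≤ k + 1)]
      linarith
  -- lower bound via expert h
  set L : ℝ := ∑ t ∈ Finset.Icc 1 T, ℓ t h / b t with hL
  have hwT : ∀ m : ℕ, m ≤ T →
      w (m+1) h = (1-η) ^ (∑ t ∈ Finset.Icc 1 m, ℓ t h / b t) := by
    intro m
    induction m with
    | zero => intro _; simp [hw1]
    | succ k ih =>
      intro hk
      rw [Finset.sum_Icc_succ_top (by omega : 1 ≤ k + 1),
        hwrec (k+1) (Finset.mem_Icc.mpr ⟨by omega, hk⟩), ih (by omega),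
        ← Real.rpow_add h1η]
  have hlow : L * Real.log (1-η) ≤ Real.log (∑ h' : H, w (T+1) h') := by
    have hle : w (T+1) h ≤ ∑ h' : H, w (T+1) h' :=
      Finset.single_le_sum (fun h' _ => (hwpos (T+1) (by omega) (by omega) h').le)
        (Finset.mem_univ h)
    have := Real.log_le_log (hwpos (T+1) (by omega) (by omega) h) hle
    rwa [hwT T le_rfl, Real.log_rpow h1η, ← hL] at this
  -- combine
  have key : η * ∑ t ∈ Finset.Icc 1 T, A t ≤ Real.log n - L * Real.log (1-η) := by
    linarith [tele T le_rfl, hlow]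
  have hloglb : -(η + η^2) ≤ Real.log (1-η) := my_log_one_sub_ge η hη0.le hη1
  have hL0 : 0 ≤ L := Finset.sum_nonneg fun t ht => (hx01 t ht h).1
  have hLT : L ≤ T := by
    calc L ≤ ∑ t ∈ Finset.Icc 1 T, (1:ℝ) := Finset.sum_le_sum fun t ht => (hx01 t ht h).2
      _ = T := by simp [Nat.card_Icc]
  -- rewrite goal
  have hsumeq : ∑ t ∈ Finset.Icc 1 T,
      ((∑ h' : H, w t h' * ℓ t h') / (∑ h' : H, w t h') - ℓ t h) / b t
      = (∑ t ∈ Finset.Icc 1 T, A t) - L := by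
    rw [hL, ← Finset.sum_sub_distrib]
    apply Finset.sum_congr rfl
    intro t ht
    have htIcc := Finset.mem_Icc.mp ht
    have hS := hSpos t htIcc.1 (by omega)
    have hbt := hb t ht
    have hsum : ∑ h' : H, w t h' * (ℓ t h' / b t) = (∑ h' : H, w t h' * ℓ t h') / b t := by
      rw [Finset.sum_div]
      exact Finset.sum_congr rfl fun h' _ => (mul_div_assoc _ _ _).symm
    rw [hA]
    show ((∑ h' : H, w t h' * ℓ t h') / (∑ h' : H, w t h') - ℓ t h) / b t
        = (∑ h' : H, w t h' * (ℓ t h' / b t)) / (∑ h' : H, w t h') - ℓ t h / b t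
    rw [hsum, sub_div, div_div, div_div, mul_comm (∑ h' : H, w t h') (b t)]
  have hRHS : Real.sqrt (T * Real.log n) = η * T := by
    rw [hlogn, show (T:ℝ) * (η^2 * T) = (η * T)^2 by ring]
    exact Real.sqrt_sq (by positivity)
  rw [hsumeq, hRHS]
  -- final arithmetic
  have hkey2 : η * ∑ t ∈ Finset.Icc 1 T, A t ≤ Real.log n + L * (η + η^2) := by
    nlinarith [key, mul_le_mul_of_nonneg_left hloglb hL0]
  have hfin : η * ((∑ t ∈ Finset.Icc 1 T, A t) - L) ≤ η * (2 * (η * T)) := by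
    nlinarith [hkey2, hlogn, mul_le_mul_of_nonneg_left hLT (sq_nonneg η)]
  exact (mul_le_mul_iff_right₀ hη0).mp hfin
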